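/- Let n ≥ 1 and let g be holomorphic on the open unit ball B of ℂⁿ. The multiplication operator M_g, defined by M_g f(z) = g(z)·f(z), is bounded on the Zygmund space Z (i.e. there exists C > 0 such that fg ∈ Z and ‖fg‖ ≤ C‖f‖ for all f ∈ Z) if and only if g belongs to Z, i.e. sup_{z∈B}(1-|z|²)|R(Rg)(z)| < ∞. -/

import Mathlib

open MeasureTheory Metric Filter Complex Topology

noncomputable section

/-- `E n` is `ℂⁿ` with the Euclidean structure. -/
abbrev E (n : ℕ) := EuclideanSpace ℂ (Fin n)

/-- The open unit ball of `ℂⁿ`. -/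
def uball (n : ℕ) : Set (E n) := Metric.ball 0 1

/-- The radial derivative `Rf(z) = ∑ z_j ∂f/∂z_j(z)`. -/
def rad (n : ℕ) (f : E n → ℂ) (z : E n) : ℂ :=
  ∑ j : Fin n, z j * fderiv ℂ f z (EuclideanSpace.single j 1)

/-- The set of values `(1-|z|²)|R(Rf)(z)|`, `z ∈ B`. -/
def zygSet (n : ℕ) (f : E n → ℂ) : Set ℝ :=
  {x | ∃ z ∈ uball n, x = (1 - ‖z‖ ^ 2) * ‖rad n (rad n f) z‖}

/-- Membership in the Zygmund space: `sup_{z∈B} (1-|z|²)|R(Rf)(z)| < ∞`. -/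
def memZ (n : ℕ) (f : E n → ℂ) : Prop := BddAbove (zygSet n f)

/-- The Zygmund norm `‖f‖ = |f(0)| + sup_{z∈B} (1-|z|²)|R(Rf)(z)|`. -/
def zygNorm (n : ℕ) (f : E n → ℂ) : ℝ :=
  ‖f 0‖ + sSup (zygSet n f)

/-- The extended Cesàro operator `T_g f(z) = ∫₀¹ f(tz) Rg(tz) dt/t`. -/
def Tg (n : ℕ) (g f : E n → ℂ) (z : E n) : ℂ :=
  ∫ t in (0:ℝ)..1, f (t • z) * rad n g (t • z) / (t : ℂ)

/-- The operator `I_g f(z) = ∫₀¹ Rf(tz) g(tz) dt/t`. -/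
def Ig (n : ℕ) (g f : E n → ℂ) (z : E n) : ℂ :=
  ∫ t in (0:ℝ)..1, rad n f (t • z) * g (t • z) / (t : ℂ)

lemma sum_single_eq (n : ℕ) (w : E n) :
    ∑ j : Fin n, (w j) • EuclideanSpace.single j (1:ℂ) = w := by
  have := (EuclideanSpace.basisFun (Fin n) ℂ).sum_repr w
  simpa [EuclideanSpace.basisFun_apply, EuclideanSpace.basisFun_repr] using this

lemma rad_eq (n : ℕ) (h : E n → ℂ) (w : E n) : rad n h w = fderiv ℂ h w w := by
  have : fderiv ℂ h w w = fderiv ℂ h w (∑ j : Fin n, (w j) • EuclideanSpace.single j (1:ℂ)) := by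
    rw [sum_single_eq]
  rw [this, map_sum, rad]
  simp [smul_eq_mul]

lemma slice_hasDerivAt {n : ℕ} {f : E n → ℂ} {w v : E n} {lam : ℂ}
    (hf : DifferentiableAt ℂ f (w + lam • v)) :
    HasDerivAt (fun mu : ℂ => f (w + mu • v)) (fderiv ℂ f (w + lam • v) v) lam := by
  have h1 : HasDerivAt (fun mu : ℂ => w + mu • v) v lam := by
    simpa using ((hasDerivAt_id lam).smul_const v).const_add w
  exact hf.hasFDerivAt.comp_hasDerivAt lam h1

lemma opnorm_fderiv_le {n : ℕ} {f : E n → ℂ} {u : E n} {R M : ℝ} (hR : 0 < R)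
    (hf : DifferentiableOn ℂ f (ball u R)) (hM : ∀ x ∈ ball u R, ‖f x‖ ≤ M) :
    ‖fderiv ℂ f u‖ ≤ (2 * M + 1) / R := by
  have hM0 : 0 ≤ M := le_trans (norm_nonneg _) (hM u (mem_ball_self hR))
  apply ContinuousLinearMap.opNorm_le_bound _ (by positivity)
  intro x
  rcases eq_or_ne x 0 with rfl | hx
  · simp
  · set e : E n := ((‖x‖ : ℂ))⁻¹ • x with he
    have hxne : (‖x‖ : ℂ) ≠ 0 := by
      simpa using norm_ne_zero_iff.mpr hx
    have hee : (‖x‖ : ℂ) • e = x := by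
      rw [he, smul_smul, mul_inv_cancel₀ hxne, one_smul]
    have hne : ‖e‖ = 1 := by
      rw [he, norm_smul]
      rw [norm_inv, Complex.norm_real, Real.norm_eq_abs, _root_.abs_of_nonneg (norm_nonneg x),
        inv_mul_cancel₀ (norm_ne_zero_iff.mpr hx)]
    set s : ℂ → ℂ := fun lam => f (u + lam • e) with hs
    have hds : DifferentiableOn ℂ s (ball 0 R) := by
      intro lam hlam
      have hmem : u + lam • e ∈ ball u R := by
        simp only [mem_ball, dist_self_add_left, norm_smul, hne, mul_one]
        simpa using hlam
      exact ((hf.differentiableAt (isOpen_ball.mem_nhds hmem)).comp lam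
        (((differentiable_id.smul_const e).const_add u) lam)).differentiableWithinAt
    have hs0 : s 0 = f u := by simp [hs]
    have hmaps : Set.MapsTo s (ball 0 R) (ball (s 0) (2 * M + 1)) := by
      intro lam hlam
      have hmem : u + lam • e ∈ ball u R := by
        simp only [mem_ball, dist_self_add_left, norm_smul, hne, mul_one]
        simpa using hlam
      have h1 : ‖s lam - s 0‖ ≤ 2 * M := by
        rw [hs0]
        calc ‖f (u + lam • e) - f u‖ ≤ ‖f (u + lam • e)‖ + ‖f u‖ := norm_sub_le _ _
        _ ≤ M + M := add_le_add (hM _ hmem) (hM _ (mem_ball_self hR))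
        _ = 2 * M := by ring
      rw [mem_ball, dist_eq_norm]
      linarith
    have hschwarz := Complex.norm_deriv_le_div_of_mapsTo_ball hds (hmaps.mono_right ball_subset_closedBall) hR
    have hda : DifferentiableAt ℂ f u := hf.differentiableAt (isOpen_ball.mem_nhds (mem_ball_self hR))
    have hderiv : deriv s 0 = fderiv ℂ f u e := by
      have := slice_hasDerivAt (f := f) (w := u) (v := e) (lam := 0) (by simpa using hda)
      simpa using this.deriv
    rw [hderiv] at hschwarz
    calc ‖(fderiv ℂ f u) x‖ = ‖(fderiv ℂ f u) ((‖x‖ : ℂ) • e)‖ := by rw [hee]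
    _ = ‖x‖ * ‖(fderiv ℂ f u) e‖ := by
        rw [(fderiv ℂ f u).map_smul]; simp [norm_smul]
    _ ≤ ‖x‖ * ((2 * M + 1) / R) := by
        exact mul_le_mul_of_nonneg_left hschwarz (norm_nonneg _)
    _ = (2 * M + 1) / R * ‖x‖ := mul_comm _ _

lemma fderiv_apply_diffAt_aux {n : ℕ} {U : Set (E n)} (hU : IsOpen U)
    {f : E n → ℂ} (hf : DifferentiableOn ℂ f U) {v : E n} (hv : ‖v‖ ≤ 1)
    {z : E n} (hz : z ∈ U) :
    DifferentiableAt ℂ (fun w => fderiv ℂ f w v) z := by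
  obtain ⟨ε, hε, hsub⟩ : ∃ ε > 0, closedBall z ε ⊆ U :=
    (nhds_basis_closedBall.mem_iff.mp (hU.mem_nhds hz))
  set δ : ℝ := ε / 8 with hδdef
  have hδ : 0 < δ := by positivity
  set ρ : ℝ := 2 * δ with hρdef
  have hρ : 0 < ρ := by positivity
  obtain ⟨M, hM⟩ : ∃ M, ∀ x ∈ closedBall z ε, ‖f x‖ ≤ M :=
    (isCompact_closedBall z ε).exists_bound_of_continuousOn (hf.continuousOn.mono hsub)
  have hball5 : ball z (5 * δ) ⊆ U := by
    refine Set.Subset.trans (fun x hx => ?_) hsub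
    rw [mem_closedBall]
    have := mem_ball.mp hx
    rw [hδdef] at this; linarith
  have hU4 : ball z (4 * δ) ⊆ U :=
    Set.Subset.trans (ball_subset_ball (by linarith)) hball5
  have hdiffat : ∀ x ∈ ball z (4 * δ), DifferentiableAt ℂ f x := fun x hx =>
    hf.differentiableAt (hU.mem_nhds (hU4 hx))
  have hMball : ∀ x ∈ ball z (5 * δ), ‖f x‖ ≤ M := by
    intro x hx
    apply hM
    rw [mem_closedBall]
    have := mem_ball.mp hx
    rw [hδdef] at this; linarith
  set L : ℝ := (2 * M + 1) / δ with hLdef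
  have hM0 : 0 ≤ M := le_trans (norm_nonneg _) (hM z (mem_closedBall_self hε.le))
  have hL0 : 0 ≤ L := by positivity
  -- Step A: fderiv bound on ball z (4δ)
  have hstepA : ∀ u ∈ ball z (4 * δ), ‖fderiv ℂ f u‖ ≤ L := by
    intro u hu
    have hsub2 : ball u δ ⊆ ball z (5 * δ) := by
      intro x hx
      have h1 := mem_ball.mp hx
      have h2 := mem_ball.mp hu
      rw [mem_ball]
      calc dist x z ≤ dist x u + dist u z := dist_triangle _ _ _
      _ < δ + 4 * δ := add_lt_add h1 h2
      _ = 5 * δ := by ring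
    exact opnorm_fderiv_le hδ (hf.mono (Set.Subset.trans hsub2 hball5))
      (fun x hx => hMball x (hsub2 hx))
  -- Step B: Lipschitz on ball z (4δ)
  have hstepB : ∀ a ∈ ball z (4 * δ), ∀ b ∈ ball z (4 * δ), ‖f a - f b‖ ≤ L * ‖a - b‖ := by
    intro a ha b hb
    exact (convex_ball z (4 * δ)).norm_image_sub_le_of_norm_fderiv_le
      (fun x hx => hdiffat x hx) (fun x hx => hstepA x hx) hb ha
  set γ : ℝ → ℂ := fun θ => circleMap 0 ρ θ with hγdef
  set Fi : E n → ℝ → ℂ := fun w θ =>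
    (γ θ * I) * ((γ θ)⁻¹ * ((γ θ)⁻¹ * (f (w + γ θ • v) - f w))) with hFidef
  have hγnorm : ∀ θ, ‖γ θ‖ = ρ := by
    intro θ
    simp only [hγdef, norm_circleMap_zero, _root_.abs_of_nonneg hρ.le]
  have hγne : ∀ θ, γ θ ≠ 0 := fun θ => circleMap_ne_center hρ.ne'
  have hγcont : Continuous γ := continuous_circleMap 0 ρ
  have hptmem : ∀ w ∈ ball z δ, ∀ θ, w + γ θ • v ∈ ball z (4 * δ) := by
    intro w hw θ
    rw [mem_ball] at hw ⊢
    calc dist (w + γ θ • v) z ≤ dist (w + γ θ • v) w + dist w z := dist_triangle _ _ _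
    _ = ‖γ θ • v‖ + dist w z := by rw [dist_self_add_left]
    _ ≤ ρ * 1 + dist w z := by
        refine add_le_add_left ?_ _
        rw [norm_smul, hγnorm]
        exact mul_le_mul_of_nonneg_left hv hρ.le
    _ < 2 * δ + δ := by rw [mul_one]; exact add_lt_add_right hw _
    _ ≤ 4 * δ := by linarith
  -- Step C : CIF representation on ball z δ
  have hstepC : ∀ w ∈ ball z δ,
      fderiv ℂ f w v = (2 * ↑Real.pi * I)⁻¹ • ∫ θ in Set.Ioc 0 (2 * Real.pi), Fi w θ := by
    intro w hw
    set s : ℂ → ℂ := fun lam => f (w + lam • v) with hsdef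
    have hs0 : s 0 = f w := by simp [hsdef]
    have hsd : DifferentiableOn ℂ s (ball 0 (3 * δ)) := by
      intro lam hlam
      have hmem : w + lam • v ∈ ball z (4 * δ) := by
        rw [mem_ball] at hw ⊢
        calc dist (w + lam • v) z ≤ dist (w + lam • v) w + dist w z := dist_triangle _ _ _
        _ = ‖lam • v‖ + dist w z := by rw [dist_self_add_left]
        _ ≤ ‖lam‖ * 1 + dist w z := by
            refine add_le_add_left ?_ _
            rw [norm_smul]
            exact mul_le_mul_of_nonneg_left hv (norm_nonneg _)
        _ < 3 * δ + δ := by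
            rw [mul_one]
            have : ‖lam‖ < 3 * δ := by simpa [dist_eq_norm] using hlam
            exact add_lt_add this hw
        _ = 4 * δ := by ring
      exact ((hdiffat _ hmem).comp lam
        (((differentiable_id.smul_const v).const_add w) lam)).differentiableWithinAt
    have hsan : AnalyticOnNhd ℂ s (ball 0 (3 * δ)) := hsd.analyticOnNhd isOpen_ball
    have hg : DifferentiableOn ℂ (dslope s 0) (ball 0 (3 * δ)) := by
      intro lam hlam
      rcases eq_or_ne lam 0 with rfl | hne
      · obtain ⟨p, hp⟩ := hsan 0 (by simp [mem_ball]; positivity)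
        exact (hp.has_fpower_series_dslope_fslope.analyticAt).differentiableAt.differentiableWithinAt
      · exact ((differentiableAt_dslope_of_ne hne).mpr
          (hsd.differentiableAt (isOpen_ball.mem_nhds hlam))).differentiableWithinAt
    have hdc : DiffContOnCl ℂ (dslope s 0) (ball (0:ℂ) ρ) := by
      constructor
      · exact hg.mono (ball_subset_ball (by rw [hρdef]; linarith))
      · refine (hg.continuousOn).mono ?_
        refine Set.Subset.trans closure_ball_subset_closedBall ?_
        intro x hx
        rw [mem_closedBall] at hx
        rw [mem_ball, hρdef] at *
        calc dist x 0 ≤ 2 * δ := by rw [hρdef] at hx; exact hx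
        _ < 3 * δ := by linarith
    have hcif := hdc.two_pi_i_inv_smul_circleIntegral_sub_inv_smul (mem_ball_self hρ)
    have hds0 : dslope s 0 0 = fderiv ℂ f w v := by
      rw [dslope_same]
      have hda : DifferentiableAt ℂ f (w + (0:ℂ) • v) := by
        simpa using hdiffat w (ball_subset_ball (by linarith) hw)
      have := slice_hasDerivAt (f := f) (w := w) (v := v) (lam := 0) hda
      simpa using this.deriv
    have hinteq : (∮ ζ in C(0, ρ), (ζ - 0)⁻¹ • dslope s 0 ζ)
        = ∫ θ in Set.Ioc 0 (2 * Real.pi), Fi w θ := by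
      have h1 : (∮ ζ in C(0, ρ), (ζ - 0)⁻¹ • dslope s 0 ζ)
          = ∮ ζ in C(0, ρ), ζ⁻¹ * (ζ⁻¹ * (f (w + ζ • v) - f w)) := by
        refine circleIntegral.integral_congr hρ.le (fun ζ hζ => ?_)
        have hζne : ζ ≠ 0 := ne_of_mem_sphere hζ hρ.ne'
        rw [dslope_of_ne s hζne, slope_def_field, hs0]
        simp only [sub_zero, smul_eq_mul, hsdef]
        field_simp
      rw [h1, circleIntegral]
      rw [intervalIntegral.integral_of_le Real.two_pi_pos.le]
      congr 1
      funext θ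
      simp only [hFidef, deriv_circleMap, smul_eq_mul, hγdef]
    rw [← hinteq, hcif, hds0]
  -- Step D : differentiate under the integral
  set μ : Measure ℝ := volume.restrict (Set.Ioc 0 (2 * Real.pi)) with hμdef
  have hFcont : ∀ x ∈ ball z δ, Continuous (fun θ => Fi x θ) := by
    intro x hx
    have hc1 : Continuous fun θ => f (x + γ θ • v) := by
      refine (hf.continuousOn).comp_continuous (continuous_const.add (hγcont.smul continuous_const)) (fun θ => hU4 (hptmem x hx θ))
    simp only [hFidef]
    exact ((hγcont.mul continuous_const).mul
      (((hγcont.inv₀ hγne)).mul ((hγcont.inv₀ hγne).mul (hc1.sub continuous_const))))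
  set F' : ℝ → (E n →L[ℂ] ℂ) := fun θ =>
    (γ θ * I) • ((γ θ)⁻¹ • ((γ θ)⁻¹ • (fderiv ℂ f (z + γ θ • v) - fderiv ℂ f z))) with hF'def
  have hzb : z ∈ ball z δ := mem_ball_self hδ
  have key : Integrable F' μ ∧ HasFDerivAt (fun x => ∫ θ, Fi x θ ∂μ) (∫ θ, F' θ ∂μ) z := by
    apply hasFDerivAt_integral_of_dominated_loc_of_lip (s := ball z δ)
      (bound := fun _ => ρ⁻¹ * (2 * L)) (isOpen_ball.mem_nhds hzb)
    · filter_upwards [isOpen_ball.eventually_mem hzb] with x hx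
      exact (hFcont x hx).aestronglyMeasurable
    · exact ((hFcont z hzb).integrableOn_Ioc)
    · letI : MeasurableSpace (E n) := borel _
      letI : BorelSpace (E n) := ⟨rfl⟩
      have m1 : Measurable fun θ => fderiv ℂ f (z + γ θ • v) :=
        (measurable_fderiv ℂ f).comp (continuous_const.add (hγcont.smul continuous_const) : Continuous fun θ => z + γ θ • v).measurable
      refine StronglyMeasurable.aestronglyMeasurable ?_
      exact ((hγcont.mul continuous_const).stronglyMeasurable).smul
        (((hγcont.inv₀ hγne).stronglyMeasurable).smul
          (((hγcont.inv₀ hγne).stronglyMeasurable).smul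
            ((m1.sub measurable_const).stronglyMeasurable)))
    · refine Filter.Eventually.of_forall (fun θ => ?_)
      refine LipschitzOnWith.of_dist_le_mul (fun x hx y hy => ?_)
      have hcoe : ((Real.nnabs (ρ⁻¹ * (2 * L))) : ℝ) = ρ⁻¹ * (2 * L) := by
        rw [Real.coe_nnabs, _root_.abs_of_nonneg]
        positivity
      rw [hcoe, dist_eq_norm, dist_eq_norm]
      have hexp : Fi x θ - Fi y θ
          = (γ θ * I) * ((γ θ)⁻¹ * ((γ θ)⁻¹ *
            ((f (x + γ θ • v) - f (y + γ θ • v)) - (f x - f y)))) := by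
        simp only [hFidef]; ring
      rw [hexp]
      have hb1 : ‖(f (x + γ θ • v) - f (y + γ θ • v)) - (f x - f y)‖
          ≤ L * ‖x - y‖ + L * ‖x - y‖ := by
        refine le_trans (norm_sub_le _ _) (add_le_add ?_ ?_)
        · have := hstepB _ (hptmem x hx θ) _ (hptmem y hy θ)
          simpa [add_sub_add_right_eq_sub] using this
        · exact hstepB _ (ball_subset_ball (by linarith) hx) _
            (ball_subset_ball (by linarith) hy)
      calc ‖(γ θ * I) * ((γ θ)⁻¹ * ((γ θ)⁻¹ *
            ((f (x + γ θ • v) - f (y + γ θ • v)) - (f x - f y))))‖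
          = ρ * (ρ⁻¹ * (ρ⁻¹ * ‖(f (x + γ θ • v) - f (y + γ θ • v)) - (f x - f y)‖)) := by
            simp only [norm_mul, norm_inv, hγnorm, Complex.norm_I]
            ring
      _ ≤ ρ * (ρ⁻¹ * (ρ⁻¹ * (L * ‖x - y‖ + L * ‖x - y‖))) := by
            refine mul_le_mul_of_nonneg_left (mul_le_mul_of_nonneg_left
              (mul_le_mul_of_nonneg_left hb1 (by positivity)) (by positivity)) hρ.le
      _ = ρ⁻¹ * (2 * L) * ‖x - y‖ := by
            field_simp
            ring
    · exact integrableOn_const measure_Ioc_lt_top.ne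
    · refine Filter.Eventually.of_forall (fun θ => ?_)
      have hd0 : HasFDerivAt (fun x : E n => x + γ θ • v)
          (ContinuousLinearMap.id ℂ (E n)) z := (hasFDerivAt_id z).add_const _
      have hd1 : HasFDerivAt (fun x => f (x + γ θ • v))
          (fderiv ℂ f (z + γ θ • v)) z := by
        have := ((hdiffat _ (hptmem z hzb θ)).hasFDerivAt).comp z hd0
        exact this
      have hd2 := (hd1.sub ((hdiffat z (ball_subset_ball (by linarith) hzb)).hasFDerivAt))
      exact ((hd2.const_mul ((γ θ)⁻¹)).const_mul ((γ θ)⁻¹)).const_mul (γ θ * I)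
  have hdiffΦ : DifferentiableAt ℂ
      (fun w => (2 * ↑Real.pi * I)⁻¹ • ∫ θ in Set.Ioc 0 (2 * Real.pi), Fi w θ) z :=
    by rw [← hμdef]; simp only [smul_eq_mul]; exact (key.2.differentiableAt).const_mul _
  refine hdiffΦ.congr_of_eventuallyEq ?_
  filter_upwards [isOpen_ball.eventually_mem hzb] with w hw
  exact hstepC w hw

lemma fderiv_apply_diffAt {n : ℕ} {U : Set (E n)} (hU : IsOpen U)
    {f : E n → ℂ} (hf : DifferentiableOn ℂ f U) (v : E n)
    {z : E n} (hz : z ∈ U) :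
    DifferentiableAt ℂ (fun w => fderiv ℂ f w v) z := by
  rcases eq_or_ne v 0 with rfl | hne
  · have : (fun w => fderiv ℂ f w (0 : E n)) = fun _ => (0:ℂ) := by
      funext w; exact map_zero _
    rw [this]; exact differentiableAt_const 0
  · set e : E n := ((‖v‖ : ℂ))⁻¹ • v with he
    have hxne : (‖v‖ : ℂ) ≠ 0 := by simpa using norm_ne_zero_iff.mpr hne
    have hve : v = (‖v‖ : ℂ) • e := by
      rw [he, smul_smul, mul_inv_cancel₀ hxne, one_smul]
    have hnorme : ‖e‖ ≤ 1 := by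
      have : ‖e‖ = 1 := by
        rw [he, norm_smul]
        simp only [norm_inv]
        rw [Complex.norm_real, Real.norm_eq_abs, _root_.abs_of_nonneg (norm_nonneg v),
          inv_mul_cancel₀ (norm_ne_zero_iff.mpr hne)]
      exact this.le
    have hfe := fderiv_apply_diffAt_aux hU hf hnorme hz
    have : (fun w => fderiv ℂ f w v) = fun w => (‖v‖ : ℂ) * fderiv ℂ f w e := by
      funext w
      calc fderiv ℂ f w v = fderiv ℂ f w ((‖v‖ : ℂ) • e) := by rw [← hve]
      _ = (‖v‖ : ℂ) * fderiv ℂ f w e := by rw [(fderiv ℂ f w).map_smul, smul_eq_mul]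
    rw [this]
    exact hfe.const_mul _
lemma rad_diffOn {n : ℕ} {U : Set (E n)} (hU : IsOpen U)
    {f : E n → ℂ} (hf : DifferentiableOn ℂ f U) :
    DifferentiableOn ℂ (rad n f) U := by
  have : rad n f = fun w => ∑ j : Fin n, w j * fderiv ℂ f w (EuclideanSpace.single j 1) := rfl
  rw [this]
  apply DifferentiableOn.fun_sum
  intro j _
  apply DifferentiableOn.mul
  · exact fun w _ => ((EuclideanSpace.proj j : E n →L[ℂ] ℂ).differentiableAt).differentiableWithinAt
  · exact fun w hw => (fderiv_apply_diffAt hU hf _ hw).differentiableWithinAt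

lemma rad_zero (n : ℕ) (h : E n → ℂ) : rad n h 0 = 0 := by
  simp [rad]

lemma slice_ball {n : ℕ} {h : E n → ℂ} (hd : DifferentiableOn ℂ h (ball (0:E n) 1))
    {z : E n} {lam : ℂ} (hm : lam • z ∈ ball (0:E n) 1) :
    HasDerivAt (fun mu : ℂ => h (mu • z)) (fderiv ℂ h (lam • z) z) lam := by
  have hda : DifferentiableAt ℂ h ((0:E n) + lam • z) := by
    simpa using hd.differentiableAt (isOpen_ball.mem_nhds hm)
  have := slice_hasDerivAt (w := (0:E n)) (v := z) hda
  simpa using this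

lemma rad_slice {n : ℕ} (h : E n → ℂ) {z : E n} (lam : ℂ) :
    rad n h (lam • z) = lam * fderiv ℂ h (lam • z) z := by
  rw [rad_eq]
  conv_lhs => rw [(fderiv ℂ h (lam • z)).map_smul]
  rw [smul_eq_mul]

lemma core_estimate {n : ℕ} {h : E n → ℂ} (hd : DifferentiableOn ℂ h (ball (0:E n) 1))
    {z : E n} (hz : z ∈ ball (0:E n) 1) {A Bc : ℝ} (hA : 0 ≤ A) (hB : 0 ≤ Bc)
    (hb1 : ∀ w : E n, w ∈ ball (0:E n) 1 → ‖w‖ ≤ 3/4 → ‖rad n h w‖ ≤ A)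
    (hb2 : ∀ t : ℝ, 1/2 ≤ t → t < 1 → ‖rad n h ((t:ℂ) • z)‖ ≤ Bc * (1 - t) ^ (-(1/2) : ℝ)) :
    ‖h z - h 0‖ ≤ 2 * A + 4 * Bc := by
  have hr : ‖z‖ < 1 := by simpa [mem_ball, dist_eq_norm] using hz
  set G : ℂ → ℂ := fun lam => h (lam • z) with hGdef
  set Ω : Set ℂ := {lam : ℂ | lam • z ∈ ball (0:E n) 1} with hΩdef
  have hΩopen : IsOpen Ω := isOpen_ball.preimage (continuous_id.smul continuous_const)
  have hmem : ∀ lam : ℂ, ‖lam‖ ≤ 1 → lam ∈ Ω := by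
    intro lam hl
    simp only [hΩdef, Set.mem_setOf_eq, mem_ball, dist_zero_right, norm_smul]
    calc ‖lam‖ * ‖z‖ ≤ 1 * ‖z‖ := mul_le_mul_of_nonneg_right hl (norm_nonneg z)
    _ = ‖z‖ := one_mul _
    _ < 1 := hr
  have hmemball : ∀ lam ∈ Ω, lam • z ∈ ball (0:E n) 1 := fun lam hl => hl
  have hGd : DifferentiableOn ℂ G Ω := fun lam hl =>
    ((slice_ball hd (hmemball lam hl)).differentiableAt).differentiableWithinAt
  have hGan : AnalyticOnNhd ℂ G Ω := hGd.analyticOnNhd hΩopen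
  have hG'an : AnalyticOnNhd ℂ (deriv G) Ω := hGan.deriv
  have hG'eq : ∀ lam ∈ Ω, deriv G lam = fderiv ℂ h (lam • z) z := fun lam hl =>
    (slice_ball hd (hmemball lam hl)).deriv
  have hradG : ∀ lam ∈ Ω, rad n h (lam • z) = lam * deriv G lam := by
    intro lam hl
    rw [hG'eq lam hl, rad_slice]
  -- max principle
  have hmax : ∀ t : ℂ, ‖t‖ ≤ 1/2 → ‖deriv G t‖ ≤ 2 * A := by
    have hsub : closedBall (0:ℂ) (1/2) ⊆ Ω := by
      intro lam hl
      exact hmem lam (le_trans (mem_closedBall_zero_iff.mp hl) (by norm_num))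
    have hdc : DiffContOnCl ℂ (deriv G) (ball (0:ℂ) (1/2)) := by
      constructor
      · exact (hG'an.differentiableOn).mono
          (Set.Subset.trans ball_subset_closedBall hsub)
      · exact ((hG'an.differentiableOn).continuousOn).mono
          (Set.Subset.trans closure_ball_subset_closedBall hsub)
    intro t ht
    have hcl : t ∈ closure (ball (0:ℂ) (1/2)) := by
      rw [closure_ball (0:ℂ) (by norm_num : (1/2 : ℝ) ≠ 0)]
      simpa [mem_closedBall, dist_zero_right] using ht
    refine Complex.norm_le_of_forall_mem_frontier_norm_le isBounded_ball hdc ?_ hcl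
    intro mu hmu
    rw [frontier_ball (0:ℂ) (by norm_num : (1/2:ℝ) ≠ 0)] at hmu
    have hmunorm : ‖mu‖ = 1/2 := by simpa [mem_sphere, dist_zero_right] using hmu
    have hmuΩ : mu ∈ Ω := hmem mu (by rw [hmunorm]; norm_num)
    have hne : mu ≠ 0 := by
      intro hc; rw [hc] at hmunorm; simp at hmunorm
    have hradbd : ‖rad n h (mu • z)‖ ≤ A := by
      refine hb1 _ (hmemball mu hmuΩ) ?_
      rw [norm_smul, hmunorm]
      calc 1/2 * ‖z‖ ≤ 1/2 * 1 := by
            exact mul_le_mul_of_nonneg_left hr.le (by norm_num)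
      _ ≤ 3/4 := by norm_num
    have := hradG mu hmuΩ
    have hnorm : ‖mu‖ * ‖deriv G mu‖ ≤ A := by
      rw [← norm_mul, ← this]; exact hradbd
    rw [hmunorm] at hnorm
    linarith
  -- FTC
  set g : ℝ → ℂ := fun t => h ((t:ℂ) • z) with hgdef
  have huIcc : Set.uIcc (0:ℝ) 1 = Set.Icc 0 1 := by
    rw [Set.uIcc_of_le]; norm_num
  have hΩt : ∀ t : ℝ, t ∈ Set.Icc (0:ℝ) 1 → ((t:ℂ)) ∈ Ω := by
    intro t ht
    refine hmem _ ?_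
    rw [Complex.norm_real, Real.norm_eq_abs, _root_.abs_of_nonneg ht.1]
    exact ht.2
  have hgd : ∀ t ∈ Set.uIcc (0:ℝ) 1, HasDerivAt g (deriv G (t:ℂ)) t := by
    intro t ht
    rw [huIcc] at ht
    have h1 := slice_ball hd (hmemball _ (hΩt t ht))
    rw [← hG'eq _ (hΩt t ht)] at h1
    exact h1.comp_ofReal
  have hcont : ContinuousOn (fun t : ℝ => deriv G (t:ℂ)) (Set.uIcc (0:ℝ) 1) := by
    rw [huIcc]
    refine ContinuousOn.comp ((hG'an.differentiableOn).continuousOn)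
      (Complex.continuous_ofReal.continuousOn) ?_
    intro t ht
    exact hΩt t ht
  have hint : IntervalIntegrable (fun t : ℝ => deriv G (t:ℂ)) volume 0 1 :=
    hcont.intervalIntegrable
  have hftc : ∫ t in (0:ℝ)..1, deriv G (t:ℂ) = g 1 - g 0 :=
    intervalIntegral.integral_eq_sub_of_hasDerivAt hgd hint
  have hg1 : g 1 = h z := by simp [hgdef]
  have hg0 : g 0 = h 0 := by simp [hgdef]
  -- pointwise bound
  set Bf : ℝ → ℝ := fun t => 2 * A + 2 * Bc * (1 - t) ^ (-(1/2) : ℝ) with hBfdef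
  have hBfint : IntervalIntegrable Bf volume 0 1 := by
    refine IntervalIntegrable.add intervalIntegrable_const ?_
    have h1 : IntervalIntegrable (fun t : ℝ => t ^ (-(1/2) : ℝ)) volume 0 1 :=
      intervalIntegral.intervalIntegrable_rpow' (by norm_num)
    have h2 := (h1.comp_sub_left 1)
    simpa using (h2.const_mul (2 * Bc)).symm
  have hae : ∀ᵐ (t : ℝ) ∂(volume.restrict (Set.uIoc (0:ℝ) 1)), ‖deriv G ((t:ℝ):ℂ)‖ ≤ Bf t := by
    have h1 : ∀ᵐ t ∂(volume.restrict (Set.uIoc (0:ℝ) 1)), t ≠ 1 := by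
      refine ae_restrict_of_ae ?_
      have : ({(1:ℝ)} : Set ℝ) =ᵐ[volume] (∅ : Set ℝ) := by
        simp [ae_eq_empty]
      filter_upwards [measure_eq_zero_iff_ae_notMem.mp (Real.volume_singleton (a := 1))] with t ht
      simpa using ht
    have h2 : ∀ᵐ t ∂(volume.restrict (Set.uIoc (0:ℝ) 1)), t ∈ Set.uIoc (0:ℝ) 1 :=
      ae_restrict_mem measurableSet_uIoc
    filter_upwards [h1, h2] with t ht1 ht2
    rw [Set.uIoc_of_le (by norm_num : (0:ℝ) ≤ 1)] at ht2
    have ht0 : 0 < t := ht2.1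
    have ht1' : t < 1 := lt_of_le_of_ne ht2.2 ht1
    have hrpow0 : (0:ℝ) ≤ (1 - t) ^ (-(1/2) : ℝ) := Real.rpow_nonneg (by linarith) _
    rcases le_or_gt t (1/2) with hc | hc
    · have := hmax (t:ℂ) (by
        rw [Complex.norm_real, Real.norm_eq_abs, _root_.abs_of_nonneg ht0.le]; exact hc)
      rw [hBfdef]
      simp only
      nlinarith
    · have htΩ : ((t:ℂ)) ∈ Ω := hΩt t ⟨ht0.le, ht1'.le⟩
      have hradbd := hb2 t hc.le ht1'
      have heq := hradG _ htΩ
      have habs : t * ‖deriv G (t:ℂ)‖ = ‖rad n h ((t:ℂ) • z)‖ := by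
        rw [heq, norm_mul, Complex.norm_real, Real.norm_eq_abs, _root_.abs_of_nonneg ht0.le]
      have hestim : t * ‖deriv G (t:ℂ)‖ ≤ Bc * (1 - t) ^ (-(1/2) : ℝ) := by
        rw [habs]; exact hradbd
      have hGnonneg : (0:ℝ) ≤ ‖deriv G (t:ℂ)‖ := norm_nonneg _
      rw [hBfdef]
      simp only
      nlinarith
  have hbound := intervalIntegral.norm_integral_le_abs_of_norm_le hae hBfint
  -- compute the integral of Bf
  have hint2 : ∫ t in (0:ℝ)..1, (1 - t) ^ (-(1/2) : ℝ) = 2 := by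
    have := intervalIntegral.integral_comp_sub_left (a := (0:ℝ)) (b := 1)
      (fun s : ℝ => s ^ (-(1/2) : ℝ)) 1
    simp only [sub_zero, sub_self] at this
    rw [this, integral_rpow (Or.inl (by norm_num))]
    have h0 : ((0:ℝ)) ^ (-(1/2 : ℝ) + 1) = 0 := Real.zero_rpow (by norm_num)
    have h1 : ((1:ℝ)) ^ (-(1/2 : ℝ) + 1) = 1 := Real.one_rpow _
    rw [h0, h1]
    norm_num
  have hBfval : ∫ t in (0:ℝ)..1, Bf t = 2 * A + 4 * Bc := by
    have h1 : IntervalIntegrable (fun t : ℝ => 2 * Bc * (1 - t) ^ (-(1/2) : ℝ)) volume 0 1 := by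
      have h1' : IntervalIntegrable (fun t : ℝ => t ^ (-(1/2) : ℝ)) volume 0 1 :=
        intervalIntegral.intervalIntegrable_rpow' (by norm_num)
      simpa using ((h1'.comp_sub_left 1).const_mul (2 * Bc)).symm
    rw [hBfdef]
    rw [intervalIntegral.integral_add intervalIntegrable_const h1]
    rw [intervalIntegral.integral_const, intervalIntegral.integral_const_mul, hint2]
    simp
    ring
  rw [hftc, hg1, hg0] at hbound
  rw [hBfval] at hbound
  calc ‖h z - h 0‖ ≤ |2 * A + 4 * Bc| := hbound
  _ = 2 * A + 4 * Bc := _root_.abs_of_nonneg (by positivity)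

-- sqrt facts
lemma rpow_half_inv {x : ℝ} (hx : 0 < x) : x ^ (-(1/2) : ℝ) = (Real.sqrt x)⁻¹ := by
  rw [Real.rpow_neg hx.le, ← Real.sqrt_eq_rpow]

lemma one_le_rpow_half_inv {x : ℝ} (hx : 0 < x) (hx1 : x ≤ 1) :
    (1:ℝ) ≤ x ^ (-(1/2) : ℝ) := by
  rw [rpow_half_inv hx]
  have h1 : Real.sqrt x ≤ 1 := by
    calc Real.sqrt x ≤ Real.sqrt 1 := Real.sqrt_le_sqrt hx1
    _ = 1 := Real.sqrt_one
  exact (one_le_inv₀ (Real.sqrt_pos.mpr hx)).mpr h1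

/-- First growth estimate: `‖Rf(z)‖ ≤ 16 S (1-‖z‖)^{-1/2}`. -/
lemma rad_bound {n : ℕ} {f : E n → ℂ} (hf : DifferentiableOn ℂ f (ball (0:E n) 1))
    {S : ℝ} (hS : 0 ≤ S)
    (hb : ∀ w : E n, w ∈ ball (0:E n) 1 → ‖rad n (rad n f) w‖ ≤ S / (1 - ‖w‖^2)) :
    ∀ z : E n, z ∈ ball (0:E n) 1 →
      ‖rad n f z‖ ≤ (16 * S) * (1 - ‖z‖) ^ (-(1/2) : ℝ) := by
  intro z hz
  have hr : ‖z‖ < 1 := by simpa [mem_ball, dist_eq_norm] using hz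
  have hr0 : 0 ≤ ‖z‖ := norm_nonneg z
  have h1r : 0 < 1 - ‖z‖ := by linarith
  have hBc0 : (0:ℝ) ≤ 2 * S * (1 - ‖z‖) ^ (-(1/2) : ℝ) := by positivity
  have hcore := core_estimate (rad_diffOn isOpen_ball hf) hz
    (show (0:ℝ) ≤ 4 * S by positivity) hBc0 ?hb1 ?hb2
  case hb1 =>
    intro w hw hw34
    refine le_trans (hb w hw) ?_
    have hw2 : 1 - ‖w‖^2 ≥ 7/16 := by nlinarith [norm_nonneg w]
    calc S / (1 - ‖w‖^2) ≤ S / (7/16) := by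
          apply div_le_div_of_nonneg_left hS (by norm_num) hw2
    _ ≤ 4 * S := by linarith
  case hb2 =>
    intro t ht12 ht1
    have ht0 : 0 ≤ t := by linarith
    have hnorm : ‖((t:ℂ)) • z‖ = t * ‖z‖ := by
      rw [norm_smul, Complex.norm_real, Real.norm_eq_abs, _root_.abs_of_nonneg ht0]
    have hmem : ((t:ℂ)) • z ∈ ball (0:E n) 1 := by
      rw [mem_ball, dist_zero_right, hnorm]
      nlinarith
    refine le_trans (hb _ hmem) ?_
    rw [hnorm]
    have h1t : 0 < 1 - t := by linarith
    have htr0 : (0:ℝ) ≤ t * ‖z‖ := mul_nonneg ht0 hr0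
    have htr1' : t * ‖z‖ < 1 := by nlinarith
    have e1 : (0:ℝ) ≤ 1 - t * ‖z‖ := by nlinarith
    have e5 : 1 - t * ‖z‖ ≤ 1 - (t * ‖z‖)^2 := by nlinarith [mul_nonneg htr0 e1]
    have hpos : (0:ℝ) < 1 - (t * ‖z‖)^2 := by nlinarith
    have hsr : 0 < Real.sqrt (1 - ‖z‖) := Real.sqrt_pos.mpr h1r
    have hst : 0 < Real.sqrt (1 - t) := Real.sqrt_pos.mpr h1t
    have hkey : Real.sqrt (1 - ‖z‖) * Real.sqrt (1 - t) ≤ 2 * (1 - (t * ‖z‖)^2) := by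
      have hs : Real.sqrt (1 - ‖z‖) * Real.sqrt (1 - t)
          = Real.sqrt ((1 - ‖z‖)*(1 - t)) := (Real.sqrt_mul (by linarith) _).symm
      rw [hs]
      have e2 : 1 - t ≤ 1 - t * ‖z‖ := by nlinarith
      have e3 : 1 - ‖z‖ ≤ 2*(1 - t * ‖z‖) := by nlinarith
      have h2 : (1 - ‖z‖)*(1 - t) ≤ (2 * (1 - (t * ‖z‖)^2))^2 := by nlinarith
      calc Real.sqrt ((1 - ‖z‖)*(1 - t)) ≤ Real.sqrt ((2 * (1 - (t * ‖z‖)^2))^2) :=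
            Real.sqrt_le_sqrt h2
      _ = 2 * (1 - (t * ‖z‖)^2) := Real.sqrt_sq (by nlinarith)
    have hfinal : S / (1 - (t * ‖z‖)^2)
        ≤ (2 * S * (1 - ‖z‖) ^ (-(1/2) : ℝ)) * (1 - t) ^ (-(1/2) : ℝ) := by
      rw [rpow_half_inv h1r, rpow_half_inv h1t, div_le_iff₀ hpos]
      rw [show 2 * S * (Real.sqrt (1 - ‖z‖))⁻¹ * (Real.sqrt (1 - t))⁻¹ * (1 - (t * ‖z‖)^2)
          = (S * (2 * (1 - (t * ‖z‖)^2))) / (Real.sqrt (1 - ‖z‖) * Real.sqrt (1 - t)) from by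
            field_simp]
      rw [le_div_iff₀ (mul_pos hsr hst)]
      exact mul_le_mul_of_nonneg_left hkey hS
    exact hfinal
  rw [rad_zero, sub_zero] at hcore
  refine le_trans hcore ?_
  have hone : (1:ℝ) ≤ (1 - ‖z‖) ^ (-(1/2) : ℝ) := one_le_rpow_half_inv h1r (by linarith)
  have hrp0 : (0:ℝ) ≤ (1 - ‖z‖) ^ (-(1/2) : ℝ) := by positivity
  nlinarith

/-- Second growth estimate: if `‖Rf(w)‖ ≤ T (1-‖w‖)^{-1/2}` then `‖f z - f 0‖ ≤ 8T`. -/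
lemma val_bound {n : ℕ} {f : E n → ℂ} (hf : DifferentiableOn ℂ f (ball (0:E n) 1))
    {T : ℝ} (hT : 0 ≤ T)
    (hb : ∀ w : E n, w ∈ ball (0:E n) 1 → ‖rad n f w‖ ≤ T * (1 - ‖w‖) ^ (-(1/2) : ℝ)) :
    ∀ z : E n, z ∈ ball (0:E n) 1 → ‖f z - f 0‖ ≤ 8 * T := by
  intro z hz
  have hr : ‖z‖ < 1 := by simpa [mem_ball, dist_eq_norm] using hz
  have hcore := core_estimate hf hz (show (0:ℝ) ≤ 2 * T by positivity) hT ?hb1 ?hb2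
  case hb1 =>
    intro w hw hw34
    refine le_trans (hb w hw) ?_
    have h1 : (1 - ‖w‖) ^ (-(1/2) : ℝ) ≤ 2 := by
      have h14 : (1:ℝ)/4 ≤ 1 - ‖w‖ := by linarith
      rw [rpow_half_inv (by linarith : (0:ℝ) < 1 - ‖w‖)]
      have h2 : (1:ℝ)/2 ≤ Real.sqrt (1 - ‖w‖) := by
        calc (1:ℝ)/2 = Real.sqrt (1/4) := by
              rw [show (1:ℝ)/4 = (1/2)^2 by norm_num, Real.sqrt_sq (by norm_num)]
        _ ≤ Real.sqrt (1 - ‖w‖) := Real.sqrt_le_sqrt h14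
      calc (Real.sqrt (1 - ‖w‖))⁻¹ ≤ ((1:ℝ)/2)⁻¹ := inv_anti₀ (by norm_num) h2
      _ = 2 := by norm_num
    calc T * (1 - ‖w‖) ^ (-(1/2) : ℝ) ≤ T * 2 := mul_le_mul_of_nonneg_left h1 hT
    _ = 2 * T := by ring
  case hb2 =>
    intro t ht12 ht1
    have ht0 : 0 ≤ t := by linarith
    have hnorm : ‖((t:ℂ)) • z‖ = t * ‖z‖ := by
      rw [norm_smul, Complex.norm_real, Real.norm_eq_abs, _root_.abs_of_nonneg ht0]
    have hmem : ((t:ℂ)) • z ∈ ball (0:E n) 1 := by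
      rw [mem_ball, dist_zero_right, hnorm]
      nlinarith [norm_nonneg z]
    refine le_trans (hb _ hmem) ?_
    rw [hnorm]
    have h1t : 0 < 1 - t := by linarith
    have h1tr : 0 < 1 - t * ‖z‖ := by nlinarith [norm_nonneg z]
    have hmono : (1 - t * ‖z‖) ^ (-(1/2) : ℝ) ≤ (1 - t) ^ (-(1/2) : ℝ) := by
      rw [rpow_half_inv h1t, rpow_half_inv h1tr]
      have : Real.sqrt (1 - t) ≤ Real.sqrt (1 - t * ‖z‖) := by
        apply Real.sqrt_le_sqrt
        nlinarith [norm_nonneg z]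
      exact inv_anti₀ (Real.sqrt_pos.mpr h1t) this
    exact mul_le_mul_of_nonneg_left hmono hT
  refine le_trans hcore (by linarith)

lemma rad_mul {n : ℕ} {f g : E n → ℂ} {z : E n}
    (hf : DifferentiableAt ℂ f z) (hg : DifferentiableAt ℂ g z) :
    rad n (fun w => f w * g w) z = f z * rad n g z + g z * rad n f z := by
  rw [rad_eq, rad_eq, rad_eq, fderiv_fun_mul hf hg]
  simp [smul_eq_mul]

lemma rad_rad_mul {n : ℕ} {f g : E n → ℂ}
    (hf : DifferentiableOn ℂ f (ball (0:E n) 1))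
    (hg : DifferentiableOn ℂ g (ball (0:E n) 1))
    {z : E n} (hz : z ∈ ball (0:E n) 1) :
    rad n (rad n (fun w => f w * g w)) z
      = f z * rad n (rad n g) z + 2 * (rad n f z * rad n g z)
        + g z * rad n (rad n f) z := by
  have hRf := rad_diffOn isOpen_ball hf
  have hRg := rad_diffOn isOpen_ball hg
  have hfz : DifferentiableAt ℂ f z := hf.differentiableAt (isOpen_ball.mem_nhds hz)
  have hgz : DifferentiableAt ℂ g z := hg.differentiableAt (isOpen_ball.mem_nhds hz)
  have hRfz : DifferentiableAt ℂ (rad n f) z := hRf.differentiableAt (isOpen_ball.mem_nhds hz)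
  have hRgz : DifferentiableAt ℂ (rad n g) z := hRg.differentiableAt (isOpen_ball.mem_nhds hz)
  have hev : rad n (fun w => f w * g w)
      =ᶠ[𝓝 z] (fun w => f w * rad n g w + g w * rad n f w) := by
    filter_upwards [isOpen_ball.mem_nhds hz] with w hw
    exact rad_mul (hf.differentiableAt (isOpen_ball.mem_nhds hw))
      (hg.differentiableAt (isOpen_ball.mem_nhds hw))
  rw [rad_eq n (rad n (fun w => f w * g w)) z, hev.fderiv_eq]
  have hd1 : DifferentiableAt ℂ (fun w => f w * rad n g w) z := hfz.mul hRgz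
  have hd2 : DifferentiableAt ℂ (fun w => g w * rad n f w) z := hgz.mul hRfz
  rw [fderiv_fun_add hd1 hd2, fderiv_fun_mul hfz hRgz, fderiv_fun_mul hgz hRfz]
  simp only [ContinuousLinearMap.add_apply, ContinuousLinearMap.smul_apply, smul_eq_mul]
  simp only [← rad_eq]
  ring

lemma mem_zygSet {n : ℕ} (f : E n → ℂ) {z : E n} (hz : z ∈ uball n) :
    (1 - ‖z‖ ^ 2) * ‖rad n (rad n f) z‖ ∈ zygSet n f := ⟨z, hz, rfl⟩

lemma zero_mem_uball (n : ℕ) : (0 : E n) ∈ uball n := mem_ball_self one_pos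

lemma sSup_zygSet_nonneg {n : ℕ} {f : E n → ℂ} (h : memZ n f) :
    0 ≤ sSup (zygSet n f) := by
  refine le_trans ?_ (le_csSup h (mem_zygSet f (zero_mem_uball n)))
  have h0 : ‖(0:E n)‖ = 0 := norm_zero
  rw [h0]
  positivity

set_option maxHeartbeats 2000000 in
/-- **Corollary.** The multiplication operator `M_g` is bounded on the Zygmund space
if and only if `g ∈ 𝒵`. -/
theorem Mg_bounded_iff_memZ (n : ℕ) (hn : 1 ≤ n) (g : E n → ℂ)
    (hg : DifferentiableOn ℂ g (uball n)) :
    (∃ C > (0:ℝ), ∀ f : E n → ℂ, DifferentiableOn ℂ f (uball n) → memZ n f →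
      memZ n (fun z => g z * f z) ∧ zygNorm n (fun z => g z * f z) ≤ C * zygNorm n f)
    ↔ memZ n g := by
  constructor
  · rintro ⟨C, hC, hb⟩
    have hone : memZ n (fun _ : E n => (1:ℂ)) := by
      refine ⟨0, fun x hx => ?_⟩
      obtain ⟨z, hz, rfl⟩ := hx
      have e1 : rad n (fun _ : E n => (1:ℂ)) = fun _ => 0 := by
        funext w; simp [rad]
      rw [e1]
      have e2 : rad n (fun _ : E n => (0:ℂ)) z = 0 := by simp [rad]
      rw [e2]
      simp
    obtain ⟨h1, _⟩ := hb (fun _ => 1) (differentiableOn_const 1) hone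
    have : (fun z => g z * 1) = g := funext fun z => mul_one _
    rwa [this] at h1
  · intro hgZ
    have hball : uball n = ball (0:E n) 1 := rfl
    have hg' : DifferentiableOn ℂ g (ball (0:E n) 1) := hg
    set Sg : ℝ := sSup (zygSet n g) with hSgdef
    have hSg0 : 0 ≤ Sg := sSup_zygSet_nonneg hgZ
    have hgBd : ∀ w : E n, w ∈ ball (0:E n) 1 → ‖rad n (rad n g) w‖ ≤ Sg / (1 - ‖w‖^2) := by
      intro w hw
      have hr : ‖w‖ < 1 := by simpa [mem_ball, dist_eq_norm] using hw
      have h1r2 : 0 < 1 - ‖w‖^2 := by nlinarith [norm_nonneg w]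
      rw [le_div_iff₀ h1r2]
      have := le_csSup hgZ (mem_zygSet g (show w ∈ uball n from hw))
      calc ‖rad n (rad n g) w‖ * (1 - ‖w‖^2)
          = (1 - ‖w‖^2) * ‖rad n (rad n g) w‖ := by
            ring
      _ ≤ Sg := this
    have hgR := rad_bound hg' hSg0 hgBd
    have hgV := val_bound hg' (by positivity : (0:ℝ) ≤ 16 * Sg) hgR
    have hgVal : ∀ z : E n, z ∈ ball (0:E n) 1 → ‖g z‖ ≤ ‖g 0‖ + 128 * Sg := by
      intro z hz
      have := hgV z hz
      calc ‖g z‖ = ‖(g z - g 0) + g 0‖ := by ring_nf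
      _ ≤ ‖g z - g 0‖ + ‖g 0‖ := norm_add_le _ _
      _ ≤ 8 * (16 * Sg) + ‖g 0‖ := by linarith
      _ = ‖g 0‖ + 128 * Sg := by ring
    refine ⟨2 * ‖g 0‖ + 1281 * Sg + 1, by positivity, ?_⟩
    intro f hf hfZ
    have hf' : DifferentiableOn ℂ f (ball (0:E n) 1) := hf
    set Sf : ℝ := sSup (zygSet n f) with hSfdef
    have hSf0 : 0 ≤ Sf := sSup_zygSet_nonneg hfZ
    have hfBd : ∀ w : E n, w ∈ ball (0:E n) 1 → ‖rad n (rad n f) w‖ ≤ Sf / (1 - ‖w‖^2) := by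
      intro w hw
      have hr : ‖w‖ < 1 := by simpa [mem_ball, dist_eq_norm] using hw
      have h1r2 : 0 < 1 - ‖w‖^2 := by nlinarith [norm_nonneg w]
      rw [le_div_iff₀ h1r2]
      have := le_csSup hfZ (mem_zygSet f (show w ∈ uball n from hw))
      calc ‖rad n (rad n f) w‖ * (1 - ‖w‖^2)
          = (1 - ‖w‖^2) * ‖rad n (rad n f) w‖ := by
            ring
      _ ≤ Sf := this
    have hfR := rad_bound hf' hSf0 hfBd
    have hfV := val_bound hf' (by positivity : (0:ℝ) ≤ 16 * Sf) hfR
    have hfVal : ∀ z : E n, z ∈ ball (0:E n) 1 → ‖f z‖ ≤ ‖f 0‖ + 128 * Sf := by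
      intro z hz
      have := hfV z hz
      calc ‖f z‖ = ‖(f z - f 0) + f 0‖ := by ring_nf
      _ ≤ ‖f z - f 0‖ + ‖f 0‖ := norm_add_le _ _
      _ ≤ 8 * (16 * Sf) + ‖f 0‖ := by linarith
      _ = ‖f 0‖ + 128 * Sf := by ring
    set N : ℝ := zygNorm n f with hNdef
    have hNeq : N = ‖f 0‖ + Sf := by
      rw [hNdef, zygNorm]
    have hN0 : 0 ≤ N := by
      rw [hNeq]; positivity
    have hSfN : Sf ≤ N := by rw [hNeq]; linarith [norm_nonneg (f 0)]
    have hf0N : ‖f 0‖ ≤ N := by rw [hNeq]; linarith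
    -- the key pointwise bound
    have hkey : ∀ z : E n, z ∈ uball n →
        (1 - ‖z‖ ^ 2) * ‖rad n (rad n (fun w => g w * f w)) z‖
          ≤ (‖g 0‖ + 1281 * Sg) * N := by
      intro z hz
      have hz' : z ∈ ball (0:E n) 1 := hz
      have hr : ‖z‖ < 1 := by simpa [mem_ball, dist_eq_norm] using hz'
      have hr0 : 0 ≤ ‖z‖ := norm_nonneg z
      have h1r : 0 < 1 - ‖z‖ := by linarith
      have h1r2 : 0 < 1 - ‖z‖^2 := by nlinarith
      set u : ℝ := (1 - ‖z‖) ^ (-(1/2) : ℝ) with hudef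
      have hu0 : 0 ≤ u := by rw [hudef]; positivity
      have huu : u * u * (1 - ‖z‖^2) ≤ 2 := by
        have h1 : u * u = (1 - ‖z‖)⁻¹ := by
          rw [hudef, rpow_half_inv h1r, ← mul_inv, Real.mul_self_sqrt h1r.le]
        rw [h1]
        have h2 : (1 - ‖z‖)⁻¹ * (1 - ‖z‖^2) = 1 + ‖z‖ := by
          field_simp
          ring
        rw [h2]; linarith
      rw [rad_rad_mul hg' hf' hz']
      have hT1 : ‖g z‖ * ‖rad n (rad n f) z‖ * (1 - ‖z‖^2) ≤ (‖g 0‖ + 128 * Sg) * Sf := by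
        have b1 := hgVal z hz'
        have b2 : ‖rad n (rad n f) z‖ * (1 - ‖z‖^2) ≤ Sf := by
          have := hfBd z hz'
          rw [le_div_iff₀ h1r2] at this
          exact this
        calc ‖g z‖ * ‖rad n (rad n f) z‖ * (1 - ‖z‖^2)
            = ‖g z‖ * (‖rad n (rad n f) z‖ * (1 - ‖z‖^2)) := by ring
        _ ≤ (‖g 0‖ + 128 * Sg) * Sf := by
            apply mul_le_mul b1 b2 (by positivity) (by positivity)
      have hT3 : ‖f z‖ * ‖rad n (rad n g) z‖ * (1 - ‖z‖^2) ≤ (‖f 0‖ + 128 * Sf) * Sg := by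
        have b1 := hfVal z hz'
        have b2 : ‖rad n (rad n g) z‖ * (1 - ‖z‖^2) ≤ Sg := by
          have := hgBd z hz'
          rw [le_div_iff₀ h1r2] at this
          exact this
        calc ‖f z‖ * ‖rad n (rad n g) z‖ * (1 - ‖z‖^2)
            = ‖f z‖ * (‖rad n (rad n g) z‖ * (1 - ‖z‖^2)) := by ring
        _ ≤ (‖f 0‖ + 128 * Sf) * Sg := by
            apply mul_le_mul b1 b2 (by positivity) (by positivity)
      have hT2 : 2 * (‖rad n g z‖ * ‖rad n f z‖) * (1 - ‖z‖^2) ≤ 1024 * Sg * Sf := by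
        have m1 := hgR z hz'
        have m2 := hfR z hz'
        have m3 : ‖rad n g z‖ * ‖rad n f z‖ ≤ (16 * Sg * u) * (16 * Sf * u) :=
          mul_le_mul m1 m2 (norm_nonneg _) (by positivity)
        calc 2 * (‖rad n g z‖ * ‖rad n f z‖) * (1 - ‖z‖^2)
            ≤ 2 * ((16 * Sg * u) * (16 * Sf * u)) * (1 - ‖z‖^2) := by nlinarith
        _ = (512 * Sg * Sf) * (u * u * (1 - ‖z‖^2)) := by ring
        _ ≤ (512 * Sg * Sf) * 2 := by
            apply mul_le_mul_of_nonneg_left huu (by positivity)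
        _ = 1024 * Sg * Sf := by ring
      calc (1 - ‖z‖ ^ 2) * ‖g z * rad n (rad n f) z + 2 * (rad n g z * rad n f z)
            + f z * rad n (rad n g) z‖
          ≤ (1 - ‖z‖ ^ 2) * (‖g z * rad n (rad n f) z‖ + ‖2 * (rad n g z * rad n f z)‖
            + ‖f z * rad n (rad n g) z‖) := by
            apply mul_le_mul_of_nonneg_left (norm_add₃_le) h1r2.le
      _ = ‖g z‖ * ‖rad n (rad n f) z‖ * (1 - ‖z‖^2)
          + 2 * (‖rad n g z‖ * ‖rad n f z‖) * (1 - ‖z‖^2)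
          + ‖f z‖ * ‖rad n (rad n g) z‖ * (1 - ‖z‖^2) := by
            rw [norm_mul, norm_mul, norm_mul, norm_mul]
            have : ‖(2:ℂ)‖ = 2 := by norm_num
            rw [this]
            ring
      _ ≤ (‖g 0‖ + 128 * Sg) * Sf + 1024 * Sg * Sf + (‖f 0‖ + 128 * Sf) * Sg := by
            linarith
      _ ≤ (‖g 0‖ + 1281 * Sg) * N := by
            nlinarith [mul_nonneg hSg0 hSf0, mul_nonneg (norm_nonneg (g 0)) hSf0,
              mul_nonneg hSg0 (norm_nonneg (f 0)), hSfN, hf0N, hSg0, hSf0, hN0,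
              mul_le_mul_of_nonneg_left hSfN (norm_nonneg (g 0)),
              mul_le_mul_of_nonneg_left hSfN hSg0,
              mul_le_mul_of_nonneg_left hf0N hSg0]
    constructor
    · exact ⟨(‖g 0‖ + 1281 * Sg) * N, fun x hx => by
        obtain ⟨z, hz, rfl⟩ := hx
        exact hkey z hz⟩
    · have hsup : sSup (zygSet n (fun z => g z * f z))
          ≤ (‖g 0‖ + 1281 * Sg) * N := by
        apply Real.sSup_le
        · rintro x ⟨z, hz, rfl⟩
          exact hkey z hz
        · positivity
      rw [zygNorm]
      have h0 : ‖g 0 * f 0‖ ≤ ‖g 0‖ * N := by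
        rw [norm_mul]
        apply mul_le_mul_of_nonneg_left _ (norm_nonneg _)
        exact hf0N
      calc ‖g 0 * f 0‖ + sSup (zygSet n (fun z => g z * f z))
          ≤ ‖g 0‖ * N + (‖g 0‖ + 1281 * Sg) * N := by
            have := add_le_add h0 hsup
            simpa using this
      _ = (2 * ‖g 0‖ + 1281 * Sg) * N := by ring
      _ ≤ (2 * ‖g 0‖ + 1281 * Sg + 1) * N := by nlinarith
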